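/- Let F(u) = ∫₀^{u} exp(t²) dt, f(u) = 1 − 2·u·exp(−u²)·F(u), let u₀ be the unique zero of f in (0, ∞), fix q > 0, define h(y) = ∫₀^{y} f(q·η) dη, ĉ₁,crit = (1/q)·∫₀^{u₀} f(u) du, ȳ(ĉ₁) the unique y ∈ (0, u₀/q) with h(y) = ĉ₁, and Ā(ĉ₁) = ∫₀^{ȳ(ĉ₁)} y·h(y)/√(ĉ₁² − h(y)²) dy. Then Ā(ĉ₁) → +∞ as ĉ₁ → ĉ₁,crit⁻, and consequently ĉ₁/Ā(ĉ₁) → 0 as ĉ₁ → ĉ₁,crit⁻. -/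

import Mathlib

open Real MeasureTheory intervalIntegral Set Filter Topology

/-- `F(u) = ∫₀^u exp(t²) dt`. -/
noncomputable def Ferf (u : ℝ) : ℝ := ∫ t in (0:ℝ)..u, Real.exp (t ^ 2)

/-- `f(u) = 1 - 2 u exp(-u²) F(u)`, the rescaled curvature function. -/
noncomputable def fker (u : ℝ) : ℝ := 1 - 2 * u * Real.exp (-(u ^ 2)) * Ferf u

lemma ferf_hasDerivAt (u : ℝ) : HasDerivAt Ferf (Real.exp (u ^ 2)) u := by
  have hc : Continuous fun t : ℝ => Real.exp (t ^ 2) := by continuity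
  exact intervalIntegral.integral_hasDerivAt_right
    (hc.intervalIntegrable 0 u) hc.aestronglyMeasurable.stronglyMeasurableAtFilter hc.continuousAt

lemma ferf_continuous : Continuous Ferf :=
  continuous_iff_continuousAt.2 fun u => (ferf_hasDerivAt u).continuousAt

lemma fker_continuous : Continuous fker := by
  unfold fker
  have := ferf_continuous
  fun_prop

lemma fker_zero : fker 0 = 1 := by simp [fker]

noncomputable def fkerD (u : ℝ) : ℝ :=
  -(2 * Real.exp (-(u ^ 2)) * Ferf u + 2 * u * (-(2*u) * Real.exp (-(u ^ 2))) * Ferf u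
    + 2 * u * Real.exp (-(u ^ 2)) * Real.exp (u ^ 2))

lemma fker_hasDerivAt (u : ℝ) : HasDerivAt fker (fkerD u) u := by
  have h1 : HasDerivAt (fun u : ℝ => Real.exp (-(u ^ 2))) (-(2*u) * Real.exp (-(u ^ 2))) u := by
    have := (hasDerivAt_pow 2 u).neg.exp
    simpa [mul_comm] using this
  have h2 : HasDerivAt (fun u : ℝ => 2 * u * Real.exp (-(u ^ 2)) * Ferf u)
      (2 * Real.exp (-(u ^ 2)) * Ferf u + 2 * u * (-(2*u) * Real.exp (-(u ^ 2))) * Ferf u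
        + 2 * u * Real.exp (-(u ^ 2)) * Real.exp (u ^ 2)) u := by
    have ha : HasDerivAt (fun u : ℝ => 2 * u) 2 u := by
      simpa using (hasDerivAt_id u).const_mul 2
    have := ((ha.mul h1).mul (ferf_hasDerivAt u))
    refine this.congr_deriv ?_
    simp only [Pi.mul_apply]; ring
  have : HasDerivAt fker (0 - (2 * Real.exp (-(u ^ 2)) * Ferf u + 2 * u * (-(2*u) * Real.exp (-(u ^ 2))) * Ferf u
        + 2 * u * Real.exp (-(u ^ 2)) * Real.exp (u ^ 2))) u :=
    (hasDerivAt_const u 1).sub h2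
  simpa [fkerD] using this

lemma fkerD_continuous : Continuous fkerD := by
  unfold fkerD
  have := ferf_continuous
  fun_prop

lemma fker_lin_bound (u₀ : ℝ) (hfu₀ : fker u₀ = 0) :
    ∃ L : ℝ, 0 < L ∧ ∀ u ∈ Icc 0 u₀, fker u ≤ L * (u₀ - u) := by
  obtain ⟨C, hC⟩ := (isCompact_Icc (a := (0:ℝ)) (b := u₀)).exists_bound_of_continuousOn
    fkerD_continuous.continuousOn
  refine ⟨max C 1, lt_of_lt_of_le one_pos (le_max_right _ _), fun u hu => ?_⟩
  have hu₀0 : (0:ℝ) ≤ u₀ := le_trans hu.1 hu.2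
  have hmem₀ : u₀ ∈ Icc (0:ℝ) u₀ := ⟨hu₀0, le_rfl⟩
  have key : ‖fker u - fker u₀‖ ≤ max C 1 * ‖u - u₀‖ :=
    Convex.norm_image_sub_le_of_norm_hasDerivWithin_le
      (f' := fkerD)
      (fun x _ => (fker_hasDerivAt x).hasDerivWithinAt)
      (fun x hx => le_trans (hC x hx) (le_max_left _ _)) (convex_Icc _ _) hmem₀ hu
  rw [hfu₀, sub_zero] at key
  have : fker u ≤ ‖fker u‖ := le_abs_self _
  refine le_trans this (le_trans key ?_)
  rw [Real.norm_eq_abs, abs_sub_comm, abs_of_nonneg (by linarith [hu.2])]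

lemma fker_pos (u₀ : ℝ) (hu₀ : 0 < u₀) (hfu₀ : fker u₀ = 0)
    (huniq : ∀ u : ℝ, 0 < u → fker u = 0 → u = u₀) :
    ∀ u ∈ Ico (0:ℝ) u₀, 0 < fker u := by
  intro u hu
  by_contra hle
  push_neg at hle
  have hu0 : u ≠ 0 := by
    intro h; rw [h, fker_zero] at hle; linarith
  have hupos : 0 < u := lt_of_le_of_ne hu.1 (Ne.symm hu0)
  rcases lt_or_eq_of_le hle with hlt | heq
  · -- fker u < 0, fker 0 = 1 > 0, IVT gives zero in (0, u)
    have hcont : ContinuousOn fker (Icc 0 u) := fker_continuous.continuousOn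
    have : (0:ℝ) ∈ Ioo (fker u) (fker 0) := by rw [fker_zero]; exact ⟨hlt, one_pos⟩
    obtain ⟨z, hz, hfz⟩ := intermediate_value_Ioo' (le_of_lt hupos) hcont this
    have hz0 := huniq z hz.1 hfz
    have : z < u₀ := lt_trans hz.2 hu.2
    rw [hz0] at this
    exact lt_irrefl _ this
  · exact absurd (huniq u hupos heq) (ne_of_lt hu.2)


set_option maxHeartbeats 1000000 in
/-- `Ā(ĉ₁) → +∞` and hence `ĉ₁/Ā(ĉ₁) → 0` as `ĉ₁ → ĉ₁,crit⁻`. -/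
theorem area_tendsto_atTop_at_critical
    (u₀ q : ℝ) (hu₀ : 0 < u₀) (hfu₀ : fker u₀ = 0)
    (huniq : ∀ u : ℝ, 0 < u → fker u = 0 → u = u₀)
    (hq : 0 < q)
    (h : ℝ → ℝ) (hh : ∀ y : ℝ, h y = ∫ η in (0:ℝ)..y, fker (q * η))
    (ccrit : ℝ) (hccrit : ccrit = (1 / q) * ∫ u in (0:ℝ)..u₀, fker u)
    (ybar : ℝ → ℝ)
    (hybar : ∀ c1 ∈ Set.Ioo (0:ℝ) ccrit,
      ybar c1 ∈ Set.Ioo 0 (u₀ / q) ∧ h (ybar c1) = c1)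
    (Abar : ℝ → ℝ)
    (hAbar : ∀ c1 ∈ Set.Ioo (0:ℝ) ccrit,
      Abar c1 = ∫ y in (0:ℝ)..(ybar c1), y * h y / Real.sqrt (c1 ^ 2 - (h y) ^ 2)) :
    Tendsto Abar (𝓝[<] ccrit) atTop ∧
    Tendsto (fun c1 : ℝ => c1 / Abar c1) (𝓝[<] ccrit) (𝓝 0) := by
  have hfq : Continuous fun η : ℝ => fker (q * η) :=
    fker_continuous.comp (continuous_const.mul continuous_id)
  have hfqI : ∀ a b : ℝ, IntervalIntegrable (fun η => fker (q * η)) volume a b :=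
    fun a b => hfq.intervalIntegrable a b
  have hcont : Continuous h := by
    have : Continuous fun y : ℝ => ∫ η in (0:ℝ)..y, fker (q * η) :=
      intervalIntegral.continuous_primitive hfqI 0
    exact (funext hh : h = _) ▸ this
  have hdiff : ∀ y z : ℝ, h z - h y = ∫ η in y..z, fker (q * η) := by
    intro y z
    rw [hh, hh]
    exact integral_interval_sub_left (hfqI 0 z) (hfqI 0 y)
  have h0 : h 0 = 0 := by rw [hh]; simp
  have hu₀q : 0 < u₀ / q := div_pos hu₀ hq
  have hqu : q * (u₀ / q) = u₀ := by field_simp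
  have hpos := fker_pos u₀ hu₀ hfu₀ huniq
  have hmono : StrictMonoOn h (Icc 0 (u₀ / q)) := by
    intro y hy z hz hyz
    have key : 0 < h z - h y := by
      rw [hdiff]
      apply intervalIntegral_pos_of_pos_on (hfqI y z) _ hyz
      intro x hx
      apply hpos
      constructor
      · exact mul_nonneg hq.le (le_trans hy.1 hx.1.le)
      · have hxz : x < u₀ / q := lt_of_lt_of_le hx.2 hz.2
        rw [← hqu]
        exact (mul_lt_mul_iff_right₀ hq).2 hxz
    linarith
  have hccrit' : h (u₀ / q) = ccrit := by
    rw [hh, hccrit]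
    have h1 : (∫ η in (0:ℝ)..(u₀/q), fker (q*η)) = q⁻¹ • ∫ x in (q*0)..(q*(u₀/q)), fker x :=
      integral_comp_mul_left fker hq.ne'
    rw [mul_zero, hqu] at h1
    rw [h1, smul_eq_mul, one_div]
  have hccpos : 0 < ccrit := by
    have := hmono (left_mem_Icc.2 (le_of_lt hu₀q)) (right_mem_Icc.2 (le_of_lt hu₀q)) hu₀q
    rw [h0, hccrit'] at this; exact this
  obtain ⟨L, hL, hLb⟩ := fker_lin_bound u₀ hfu₀
  set δ : ℝ := u₀ / (4*q) with hδdef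
  have hδpos : 0 < δ := by positivity
  have h4δ : u₀ / q = 4 * δ := by rw [hδdef]; field_simp
  set y₁ : ℝ := 2*δ with hy₁def
  have hy₁mem : y₁ ∈ Icc 0 (u₀/q) := ⟨by positivity, by rw [h4δ]; linarith⟩
  set m₁ : ℝ := h y₁ with hm₁def
  have hm₁pos : 0 < m₁ := by
    have := hmono (left_mem_Icc.2 (le_of_lt hu₀q)) hy₁mem (by positivity)
    rw [h0] at this; exact this
  set m : ℝ := y₁ * m₁ with hmdef
  have hmpos : 0 < m := by positivity
  set K : ℝ := Real.sqrt (2*ccrit*L*q) with hKdef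
  have hKpos : 0 < K := Real.sqrt_pos.2 (by positivity)
  have main : Tendsto Abar (𝓝[<] ccrit) atTop := by
    rw [tendsto_atTop]
    intro M
    set T : ℝ := (max M 0 + 1) * K / m with hTdef
    have hTpos : 0 < T := by
      have h1 : (0:ℝ) ≤ max M 0 := le_max_right _ _
      have h2 : (0:ℝ) < max M 0 + 1 := by linarith
      positivity
    set s₀ : ℝ := δ * Real.exp (-T) with hs₀def
    have hs₀pos : 0 < s₀ := by positivity
    have hs₀δ : s₀ ≤ δ := by
      have he : Real.exp (-T) ≤ 1 := Real.exp_le_one_iff.2 (by linarith)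
      rw [hs₀def]
      exact mul_le_of_le_one_right hδpos.le he
    have hbmem : u₀/q - s₀ ∈ Icc 0 (u₀/q) := by
      constructor
      · rw [h4δ]; linarith
      · linarith
    have hb_lt : h (u₀/q - s₀) < ccrit := by
      rw [← hccrit']
      exact hmono hbmem (right_mem_Icc.2 (le_of_lt hu₀q)) (by linarith)
    have hb_nonneg : 0 ≤ h (u₀/q - s₀) := by
      have := hmono.monotoneOn (left_mem_Icc.2 (le_of_lt hu₀q)) hbmem hbmem.1
      rw [h0] at this; exact this
    filter_upwards [Ioo_mem_nhdsLT_of_mem (show ccrit ∈ Ioc (h (u₀/q - s₀)) ccrit from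
      ⟨hb_lt, le_rfl⟩)] with c hc
    have hcIoo : c ∈ Ioo (0:ℝ) ccrit := ⟨lt_of_le_of_lt hb_nonneg hc.1, hc.2⟩
    obtain ⟨hyIoo, hyc⟩ := hybar c hcIoo
    set B := ybar c with hBdef
    set s : ℝ := u₀/q - B with hsdef
    have hs_pos : 0 < s := by have := hyIoo.2; simp only [hsdef]; linarith
    have hBmem : B ∈ Icc 0 (u₀/q) := ⟨le_of_lt hyIoo.1, le_of_lt hyIoo.2⟩
    have hs_lt : s < s₀ := by
      have hlt : u₀/q - s₀ < B := by
        by_contra hcon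
        push_neg at hcon
        have := hmono.monotoneOn hBmem hbmem hcon
        rw [hyc] at this
        linarith [hc.1]
      simp only [hsdef]; linarith
    set a : ℝ := B - δ with hadef
    have haB : a ≤ B := by linarith
    have hay₁ : y₁ ≤ a := by
      have e : B = 4*δ - s := by simp only [hsdef]; rw [← h4δ]; ring
      simp only [hadef, hy₁def, e]
      linarith [hs_lt, hs₀δ]
    have ha_pos : 0 < a := lt_of_lt_of_le (by positivity) hay₁
    have hamem : a ∈ Icc 0 (u₀/q) := ⟨le_of_lt ha_pos, le_trans haB hBmem.2⟩
    have h_hy_le : ∀ y ∈ Icc 0 B, h y ≤ c := by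
      intro y hy
      have hymem : y ∈ Icc 0 (u₀/q) := ⟨hy.1, le_trans hy.2 hBmem.2⟩
      have := hmono.monotoneOn hymem hBmem hy.2
      rw [hyc] at this; exact this
    have h_hy_nonneg : ∀ y ∈ Icc 0 B, 0 ≤ h y := by
      intro y hy
      have hymem : y ∈ Icc 0 (u₀/q) := ⟨hy.1, le_trans hy.2 hBmem.2⟩
      have := hmono.monotoneOn (left_mem_Icc.2 (le_of_lt hu₀q)) hymem hy.1
      rw [h0] at this; exact this
    -- minimum of fker (q ·) on [0, B]
    obtain ⟨z₀, hz₀mem, hz₀min⟩ := isCompact_Icc.exists_isMinOn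
      (nonempty_Icc.2 hBmem.1) (hfq.continuousOn (s := Icc 0 B))
    set μ : ℝ := fker (q * z₀) with hμdef
    have hμpos : 0 < μ := by
      apply hpos
      constructor
      · exact mul_nonneg hq.le hz₀mem.1
      · have hz₀lt : z₀ < u₀ / q := lt_of_le_of_lt hz₀mem.2 hyIoo.2
        rw [← hqu]
        exact (mul_lt_mul_iff_right₀ hq).2 hz₀lt
    have hμmin : ∀ x ∈ Icc 0 B, μ ≤ fker (q*x) := fun x hx => hz₀min hx
    have hgap : ∀ y ∈ Icc 0 B, μ * (B - y) ≤ c - h y := by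
      intro y hy
      have e : c - h y = ∫ η in y..B, fker (q*η) := by rw [← hyc, hdiff]
      rw [e]
      have hint : (∫ _η in y..B, μ) ≤ ∫ η in y..B, fker (q*η) := by
        apply intervalIntegral.integral_mono_on hy.2 intervalIntegrable_const (hfqI y B)
        intro x hx
        exact hμmin x ⟨le_trans hy.1 hx.1, hx.2⟩
      rw [intervalIntegral.integral_const, smul_eq_mul] at hint
      linarith [hint]
    have hgap2 : ∀ y ∈ Icc 0 B, μ * c * (B - y) ≤ c^2 - (h y)^2 := by
      intro y hy
      have h1 := hgap y hy
      have h2 := h_hy_le y hy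
      have h3 := h_hy_nonneg y hy
      have h4 : 0 ≤ μ * (B - y) := mul_nonneg hμpos.le (by linarith [hy.2])
      have h5 : c ≤ c + h y := by linarith
      have h6 : μ * (B - y) * c ≤ (c - h y) * (c + h y) :=
        mul_le_mul h1 h5 hcIoo.1.le (by linarith)
      have h7 : (c - h y) * (c + h y) = c^2 - (h y)^2 := by ring
      have h8 : μ * (B - y) * c = μ * c * (B - y) := by ring
      linarith
    set g : ℝ → ℝ := fun y : ℝ => y * h y / Real.sqrt (c^2 - (h y)^2) with hgdef
    have hgmeas : Measurable g := by
      apply Measurable.div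
      · exact (continuous_id.mul hcont).measurable
      · exact (Real.continuous_sqrt.comp (continuous_const.sub (hcont.pow 2))).measurable
    have hgnonneg : ∀ y ∈ Icc 0 B, 0 ≤ g y := fun y hy =>
      div_nonneg (mul_nonneg hy.1 (h_hy_nonneg y hy)) (Real.sqrt_nonneg _)
    -- integrability of g on [0, B]
    have hψint : IntervalIntegrable
        (fun y : ℝ => (B*c/Real.sqrt (μ*c)) * (B - y) ^ (-(1/2) : ℝ)) volume 0 B := by
      apply IntervalIntegrable.const_mul
      have h1 : IntervalIntegrable (fun x : ℝ => x ^ (-(1/2):ℝ)) volume 0 B :=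
        intervalIntegrable_rpow' (by norm_num)
      have h2 := (h1.comp_sub_left B enorm_ne_top).symm
      simpa using h2
    have hμc : 0 < μ * c := mul_pos hμpos hcIoo.1
    have hgint : IntervalIntegrable g volume 0 B := by
      apply hψint.mono_fun hgmeas.aestronglyMeasurable
      rw [Filter.EventuallyLE, ae_restrict_iff' measurableSet_uIoc]
      apply Filter.Eventually.of_forall
      intro y hy
      rw [Set.uIoc_of_le hBmem.1] at hy
      have hy' : y ∈ Icc 0 B := ⟨le_of_lt hy.1, hy.2⟩
      have hbse : 0 ≤ (B - y) ^ (-(1/2):ℝ) := Real.rpow_nonneg (by linarith [hy.2]) _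
      have hψnn : 0 ≤ (B*c/Real.sqrt (μ*c)) * (B - y) ^ (-(1/2) : ℝ) := by
        apply mul_nonneg _ hbse
        apply div_nonneg (mul_nonneg hBmem.1 (le_of_lt hcIoo.1)) (Real.sqrt_nonneg _)
      rw [Real.norm_eq_abs, Real.norm_eq_abs, abs_of_nonneg (hgnonneg y hy'),
        abs_of_nonneg hψnn]
      rcases eq_or_lt_of_le hy.2 with hyB | hyB
      · -- y = B
        have : h y = c := by rw [hyB, hyc]
        simp only [hgdef, this]
        rw [sub_self, Real.sqrt_zero, div_zero]
        exact hψnn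
      · -- y < B
        have hby : 0 < B - y := by linarith
        have hd : Real.sqrt (μ*c) * Real.sqrt (B - y) ≤ Real.sqrt (c^2 - (h y)^2) := by
          rw [← Real.sqrt_mul (le_of_lt hμc)]
          apply Real.sqrt_le_sqrt
          have h9 := hgap2 y hy'
          linarith [h9]
        have hdpos : 0 < Real.sqrt (μ*c) * Real.sqrt (B - y) :=
          mul_pos (Real.sqrt_pos.2 hμc) (Real.sqrt_pos.2 hby)
        have hnum : y * h y ≤ B * c :=
          mul_le_mul hy'.2 (h_hy_le y hy') (h_hy_nonneg y hy') hBmem.1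
        have e1 : (B - y) ^ (-(1/2):ℝ) = (Real.sqrt (B - y))⁻¹ := by
          rw [Real.rpow_neg (le_of_lt hby), Real.sqrt_eq_rpow]
        rw [e1]
        have e2 : B*c/Real.sqrt (μ*c) * (Real.sqrt (B - y))⁻¹
            = B*c/(Real.sqrt (μ*c) * Real.sqrt (B - y)) := by
          rw [div_mul_eq_div_div, div_eq_mul_inv (B*c/Real.sqrt (μ*c))]
        rw [e2]
        simp only [hgdef]
        apply div_le_div₀ (mul_nonneg hBmem.1 (le_of_lt hcIoo.1)) hnum hdpos hd
    -- split the integral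
    have hgi1 : IntervalIntegrable g volume 0 a :=
      hgint.mono_set (uIcc_subset_uIcc (by simp [Set.uIcc_of_le hBmem.1, hBmem.1])
        (by rw [Set.uIcc_of_le hBmem.1]; exact ⟨le_of_lt ha_pos, haB⟩))
    have hgi2 : IntervalIntegrable g volume a B :=
      hgint.mono_set (uIcc_subset_uIcc (by rw [Set.uIcc_of_le hBmem.1]; exact ⟨le_of_lt ha_pos, haB⟩)
        (by simp [Set.uIcc_of_le hBmem.1, hBmem.1]))
    have hsplit : Abar c = (∫ y in (0:ℝ)..a, g y) + ∫ y in a..B, g y := by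
      rw [hAbar c hcIoo]
      exact (intervalIntegral.integral_add_adjacent_intervals hgi1 hgi2).symm
    have hI1 : 0 ≤ ∫ y in (0:ℝ)..a, g y := by
      apply intervalIntegral.integral_nonneg (le_of_lt ha_pos)
      intro u hu
      exact hgnonneg u ⟨hu.1, le_trans hu.2 haB⟩
    -- lower bound on [a, B]
    set φ : ℝ → ℝ := fun y => m / (K * (s + B - y)) with hφdef
    have hφcont : ContinuousOn φ (Set.uIcc a B) := by
      rw [Set.uIcc_of_le haB]
      apply ContinuousOn.div continuousOn_const
      · fun_prop
      · intro y hy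
        have : 0 < s + B - y := by have := hy.2; linarith
        positivity
    have hφint : IntervalIntegrable φ volume a B := hφcont.intervalIntegrable
    have hcomp : (∫ y in a..B, φ y) ≤ ∫ y in a..B, g y := by
      apply intervalIntegral.integral_mono_ae_restrict haB hφint hgi2
      have hae1 : ∀ᵐ y ∂(volume.restrict (Icc a B)), y ≠ B := by
        refine ae_restrict_of_ae ?_
        rw [ae_iff]
        have : {y : ℝ | ¬ y ≠ B} = {B} := by ext y; simp
        rw [this]
        exact Real.volume_singleton
      filter_upwards [hae1, ae_restrict_mem measurableSet_Icc] with y hyne hymem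
      have hyB : y < B := lt_of_le_of_ne hymem.2 hyne
      have hy' : y ∈ Icc 0 B := ⟨le_trans (le_of_lt ha_pos) hymem.1, hymem.2⟩
      -- numerator bound
      have hym : y ∈ Icc 0 (u₀/q) := ⟨hy'.1, le_trans hy'.2 hBmem.2⟩
      have hhy₁ : m₁ ≤ h y := by
        have := hmono.monotoneOn hy₁mem hym (le_trans hay₁ hymem.1)
        exact this
      have hnum : m ≤ y * h y := by
        have hy₁y : y₁ ≤ y := le_trans hay₁ hymem.1
        have hy₁pos : (0:ℝ) < y₁ := by positivity
        exact mul_le_mul hy₁y hhy₁ hm₁pos.le (le_trans hy₁pos.le hy₁y)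
      -- denominator bound
      have hub : c - h y ≤ L*q*(s + B - y)*(B - y) := by
        have e : c - h y = ∫ η in y..B, fker (q*η) := by rw [← hyc, hdiff]
        rw [e]
        have hint : (∫ η in y..B, fker (q*η)) ≤ ∫ _η in y..B, L*q*(s + B - y) := by
          apply intervalIntegral.integral_mono_on (le_of_lt hyB) (hfqI y B)
            intervalIntegrable_const
          intro x hx
          have hxm : q * x ∈ Icc 0 u₀ := by
            constructor
            · exact mul_nonneg hq.le (le_trans hy'.1 hx.1)
            · have hxq : x ≤ u₀/q := le_trans hx.2 hBmem.2
              rw [← hqu]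
              exact mul_le_mul_of_nonneg_left hxq hq.le
          have hL1 : fker (q*x) ≤ L * (u₀ - q*x) := hLb (q*x) hxm
          have e2 : u₀ - q*x = q * (s + B - x) := by
            have : u₀ = q * (u₀/q) := hqu.symm
            rw [this]; simp only [hsdef]; ring
          rw [e2] at hL1
          have h5 : q * (s + B - x) ≤ q * (s + B - y) :=
            mul_le_mul_of_nonneg_left (by linarith [hx.1]) (le_of_lt hq)
          have h6 : L * (q * (s + B - x)) ≤ L * (q * (s + B - y)) :=
            mul_le_mul_of_nonneg_left h5 (le_of_lt hL)
          calc fker (q*x) ≤ L * (q * (s + B - x)) := hL1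
            _ ≤ L * (q * (s + B - y)) := h6
            _ = L*q*(s + B - y) := by ring
        rw [intervalIntegral.integral_const, smul_eq_mul] at hint
        linarith [hint]
      have hgap3 : c^2 - (h y)^2 ≤ (K * (s + B - y))^2 := by
        have h2 := h_hy_le y hy'
        have h3 := h_hy_nonneg y hy'
        have hsb : 0 < s + B - y := by linarith
        have hKsq : K^2 = 2*ccrit*L*q := Real.sq_sqrt (by positivity)
        have hcc : c ≤ ccrit := le_of_lt hcIoo.2
        have hby : 0 < B - y := by linarith
        have e1 : 0 ≤ c - h y := by linarith
        have e2 : c + h y ≤ 2*ccrit := by linarith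
        have enn : 0 ≤ L*q*(s + B - y) := mul_nonneg (mul_nonneg hL.le hq.le) hsb.le
        have e3 : (c - h y) * (c + h y) ≤ (L*q*(s + B - y)*(B - y)) * (2*ccrit) :=
          mul_le_mul hub e2 (by linarith [hcIoo.1]) (mul_nonneg enn hby.le)
        have e4 : L*q*(s + B - y)*(B - y) ≤ L*q*(s + B - y)*(s + B - y) :=
          mul_le_mul_of_nonneg_left (by linarith) enn
        have e5 : (L*q*(s + B - y)*(B - y)) * (2*ccrit) ≤ (L*q*(s + B - y)*(s + B - y)) * (2*ccrit) :=
          mul_le_mul_of_nonneg_right e4 (by linarith [hccpos])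
        have e6 : (K * (s + B - y))^2 = (L*q*(s + B - y)*(s + B - y)) * (2*ccrit) := by
          rw [mul_pow, hKsq]; ring
        have e7 : c^2 - (h y)^2 = (c - h y) * (c + h y) := by ring
        linarith
      have hsqle : Real.sqrt (c^2 - (h y)^2) ≤ K * (s + B - y) := by
        have hsb : 0 < s + B - y := by linarith
        calc Real.sqrt (c^2 - (h y)^2) ≤ Real.sqrt ((K * (s + B - y))^2) :=
              Real.sqrt_le_sqrt hgap3
          _ = K * (s + B - y) := Real.sqrt_sq (by positivity)
      have hdpos : 0 < Real.sqrt (c^2 - (h y)^2) := by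
        apply Real.sqrt_pos.2
        have h8 := hgap2 y hy'
        have hby : 0 < B - y := by linarith
        have h9 : 0 < μ * c * (B - y) := mul_pos (mul_pos hμpos hcIoo.1) hby
        linarith
      simp only [hφdef, hgdef]
      exact div_le_div₀ (le_trans (le_of_lt hmpos) hnum) hnum hdpos hsqle
    -- value of the lower integral
    have hφval : (∫ y in a..B, φ y) = (m/K) * (Real.log (s+δ) - Real.log s) := by
      have e0 : ∀ y : ℝ, φ y = (m/K) * ((s + B) - y)⁻¹ := by
        intro y
        simp only [hφdef]
        rw [div_mul_eq_div_div, div_eq_mul_inv (m/K)]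
      simp_rw [e0]
      rw [intervalIntegral.integral_const_mul]
      have e1 : (∫ y in a..B, ((s + B) - y)⁻¹) = ∫ x in (s+B-B)..(s+B-a), x⁻¹ :=
        intervalIntegral.integral_comp_sub_left (fun x => x⁻¹) (s+B)
      have e2 : s + B - B = s := by ring
      have e3 : s + B - a = s + δ := by simp only [hadef]; ring
      rw [e1, e2, e3]
      rw [integral_inv]
      · rw [Real.log_div (by linarith) (ne_of_gt hs_pos)]
      · rw [Set.uIcc_of_le (by linarith)]
        intro hmem
        exact absurd hmem.1 (by linarith)
    -- final numeric bound
    have hfinal : M ≤ (m/K) * (Real.log (s+δ) - Real.log s) := by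
      have l1 : Real.log δ ≤ Real.log (s+δ) := Real.log_le_log hδpos (by linarith)
      have l2 : Real.log s ≤ Real.log s₀ := Real.log_le_log hs_pos (le_of_lt hs_lt)
      have l3 : Real.log s₀ = Real.log δ - T := by
        rw [hs₀def, Real.log_mul (ne_of_gt hδpos) (Real.exp_ne_zero _), Real.log_exp]
        ring
      have l4 : T ≤ Real.log (s+δ) - Real.log s := by
        rw [l3] at l2; linarith
      have l5 : (m/K) * T = max M 0 + 1 := by
        rw [hTdef]
        field_simp
      have l6 : (m/K) * T ≤ (m/K) * (Real.log (s+δ) - Real.log s) := by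
        apply mul_le_mul_of_nonneg_left l4 (le_of_lt (by positivity))
      rw [l5] at l6
      have : M ≤ max M 0 + 1 := by
        have := le_max_left M 0; linarith
      linarith
    rw [hsplit]
    linarith
  refine ⟨main, ?_⟩
  have hid : Tendsto (fun c1 : ℝ => c1) (𝓝[<] ccrit) (𝓝 ccrit) :=
    tendsto_id.mono_right nhdsWithin_le_nhds
  exact hid.div_atTop main
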